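/- Let C = c₁c₂ᵀ ∈ ℝ^{M×N} be a rank-one (separable) matrix and let ψ ∈ ℝ^N satisfy Cψ ≠ 0. Then for every G ∈ ℝ^{M×N} the following identity holds: ‖C‖_F²·‖Gψ‖² + 4·tr(CGᵀ)·⟨Cψ, Gψ⟩ + ‖G‖_F²·‖Cψ‖² − 2·⟨Gψ, G(CᵀCψ)⟩ − ‖GᵀCψ‖² − 2·⟨Cψ, G(CᵀGψ)⟩ − ‖CᵀGψ‖² = ‖ ‖Cψ‖·G − (1/‖Cψ‖)·(Gψ)(CᵀCψ)ᵀ ‖_F² − ‖GᵀCψ − CᵀGψ‖². (This is the quadratic coefficient in t of the polynomial t ↦ ‖C+tG‖_F²·‖(C+tG)ψ‖² − ‖(C+tG)ᵀ(C+tG)ψ‖², rewritten in closed form under separability.) -/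

import Mathlib

open scoped BigOperators
open Matrix

noncomputable section

/-- Squared Frobenius norm of a real matrix: `‖A‖_F² = ∑ᵢⱼ A i j ^ 2`. -/
def frobSq {M N : ℕ} (A : Matrix (Fin M) (Fin N) ℝ) : ℝ := ∑ i, ∑ j, A i j ^ 2

/-- Squared Euclidean norm of a vector. -/
def vnormSq {n : ℕ} (x : Fin n → ℝ) : ℝ := ∑ i, x i ^ 2

/-- Euclidean inner product of two vectors. -/
def vdot {n : ℕ} (x y : Fin n → ℝ) : ℝ := ∑ i, x i * y i


lemma vdot_self {n : ℕ} (x : Fin n → ℝ) : vdot x x = vnormSq x := by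
  simp [vdot, vnormSq, sq]

lemma vnormSq_smul {n : ℕ} (a : ℝ) (x : Fin n → ℝ) :
    vnormSq (a • x) = a ^ 2 * vnormSq x := by
  simp [vnormSq, Finset.mul_sum, mul_pow]

lemma vdot_smul_left {n : ℕ} (a : ℝ) (x y : Fin n → ℝ) :
    vdot (a • x) y = a * vdot x y := by
  simp [vdot, Finset.mul_sum, mul_assoc]

lemma vdot_smul_right {n : ℕ} (a : ℝ) (x y : Fin n → ℝ) :
    vdot x (a • y) = a * vdot x y := by
  simp [vdot, Finset.mul_sum]; exact Finset.sum_congr rfl fun i _ => by ring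

lemma mulVec_smul' {m n : ℕ} (A : Matrix (Fin m) (Fin n) ℝ) (a : ℝ) (x : Fin n → ℝ) :
    A.mulVec (a • x) = a • A.mulVec x := by
  funext i
  simp [Matrix.mulVec, dotProduct, Finset.mul_sum]
  exact Finset.sum_congr rfl fun j _ => by ring

lemma vdot_transpose {m n : ℕ} (A : Matrix (Fin m) (Fin n) ℝ) (x : Fin m → ℝ) (y : Fin n → ℝ) :
    vdot x (A.mulVec y) = vdot (Aᵀ.mulVec x) y := by
  simp only [vdot, Matrix.mulVec, dotProduct, Matrix.transpose_apply,
    Finset.mul_sum, Finset.sum_mul]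
  rw [Finset.sum_comm]
  exact Finset.sum_congr rfl fun j _ => Finset.sum_congr rfl fun i _ => by ring

lemma sep_mulVec {m n : ℕ} (c₁ : Fin m → ℝ) (c₂ : Fin n → ℝ) (ψ : Fin n → ℝ) :
    (vecMulVec c₁ c₂).mulVec ψ = (vdot c₂ ψ) • c₁ := by
  funext i
  simp [Matrix.mulVec, dotProduct, vecMulVec_apply, vdot, Finset.sum_mul]
  exact Finset.sum_congr rfl fun j _ => by ring

lemma sep_transpose_mulVec {m n : ℕ} (c₁ : Fin m → ℝ) (c₂ : Fin n → ℝ) (x : Fin m → ℝ) :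
    (vecMulVec c₁ c₂)ᵀ.mulVec x = (vdot c₁ x) • c₂ := by
  funext j
  simp [Matrix.mulVec, dotProduct, vecMulVec_apply, vdot, Finset.sum_mul,
    Matrix.transpose_apply]
  exact Finset.sum_congr rfl fun i _ => by ring

lemma sep_frobSq {m n : ℕ} (c₁ : Fin m → ℝ) (c₂ : Fin n → ℝ) :
    frobSq (vecMulVec c₁ c₂) = vnormSq c₁ * vnormSq c₂ := by
  simp only [frobSq, vnormSq, vecMulVec_apply, Finset.sum_mul, Finset.mul_sum]
  rw [Finset.sum_comm]
  exact Finset.sum_congr rfl fun i _ => Finset.sum_congr rfl fun j _ => by ring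

lemma sep_trace {m n : ℕ} (c₁ : Fin m → ℝ) (c₂ : Fin n → ℝ) (G : Matrix (Fin m) (Fin n) ℝ) :
    Matrix.trace (vecMulVec c₁ c₂ * Gᵀ) = vdot c₁ (G.mulVec c₂) := by
  simp only [Matrix.trace, Matrix.diag, Matrix.mul_apply, Matrix.transpose_apply,
    vecMulVec_apply, vdot, Matrix.mulVec, dotProduct, Finset.mul_sum]
  exact Finset.sum_congr rfl fun i _ => Finset.sum_congr rfl fun j _ => by ring

lemma vnormSq_sub {n : ℕ} (x y : Fin n → ℝ) :
    vnormSq (x - y) = vnormSq x - 2 * vdot x y + vnormSq y := by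
  simp only [vnormSq, vdot, Pi.sub_apply, Finset.mul_sum, ← Finset.sum_add_distrib,
    ← Finset.sum_sub_distrib]
  exact Finset.sum_congr rfl fun i _ => by ring

lemma frobSq_expand {m n : ℕ} (a b : ℝ) (G : Matrix (Fin m) (Fin n) ℝ)
    (u : Fin m → ℝ) (v : Fin n → ℝ) :
    frobSq (a • G - b • vecMulVec u v)
      = a ^ 2 * frobSq G - 2 * (a * b) * vdot u (G.mulVec v)
        + b ^ 2 * (vnormSq u * vnormSq v) := by
  have h1 : a ^ 2 * frobSq G = ∑ i, ∑ j, a ^ 2 * G i j ^ 2 := by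
    simp [frobSq, Finset.mul_sum]
  have h2 : 2 * (a * b) * vdot u (G.mulVec v)
      = ∑ i, ∑ j, 2 * (a * b) * (u i * (G i j * v j)) := by
    simp [vdot, Matrix.mulVec, dotProduct, Finset.mul_sum]
  have h3 : b ^ 2 * (vnormSq u * vnormSq v) = ∑ i, ∑ j, b ^ 2 * (u i ^ 2 * v j ^ 2) := by
    simp only [vnormSq, Finset.mul_sum, Finset.sum_mul]
    rw [Finset.sum_comm]
  rw [h1, h2, h3]
  simp only [frobSq, Matrix.sub_apply, Matrix.smul_apply, vecMulVec_apply, smul_eq_mul,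
    ← Finset.sum_add_distrib, ← Finset.sum_sub_distrib]
  exact Finset.sum_congr rfl fun i _ => Finset.sum_congr rfl fun j _ => by ring

lemma vnormSq_pos {n : ℕ} (x : Fin n → ℝ) (hx : x ≠ 0) : 0 < vnormSq x := by
  rcases Function.ne_iff.mp hx with ⟨i, hi⟩
  have h1 : 0 < x i ^ 2 := lt_of_le_of_ne (sq_nonneg _) (Ne.symm (pow_ne_zero 2 hi))
  have : x i ^ 2 ≤ vnormSq x :=
    Finset.single_le_sum (f := fun i => x i ^ 2) (fun j _ => by positivity) (Finset.mem_univ i)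
  linarith

/-- closed form, under separability `C = c₁c₂ᵀ` with `Cψ ≠ 0`, of
the quadratic coefficient in `t` of
`t ↦ ‖C+tG‖_F²·‖(C+tG)ψ‖² − ‖(C+tG)ᵀ(C+tG)ψ‖²`:
`‖C‖_F²·‖Gψ‖² + 4·tr(CGᵀ)·⟨Cψ,Gψ⟩ + ‖G‖_F²·‖Cψ‖² − 2·⟨Gψ, G(CᵀCψ)⟩ − ‖GᵀCψ‖²
  − 2·⟨Cψ, G(CᵀGψ)⟩ − ‖CᵀGψ‖²
  = ‖ ‖Cψ‖·G − (1/‖Cψ‖)·(Gψ)(CᵀCψ)ᵀ ‖_F² − ‖GᵀCψ − CᵀGψ‖²`. -/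
theorem statement5 (M N : ℕ) (c₁ : Fin M → ℝ) (c₂ : Fin N → ℝ)
    (C : Matrix (Fin M) (Fin N) ℝ) (hC : C = vecMulVec c₁ c₂)
    (ψ : Fin N → ℝ) (hψ : C.mulVec ψ ≠ 0)
    (G : Matrix (Fin M) (Fin N) ℝ) :
    frobSq C * vnormSq (G.mulVec ψ)
      + 4 * Matrix.trace (C * Gᵀ) * vdot (C.mulVec ψ) (G.mulVec ψ)
      + frobSq G * vnormSq (C.mulVec ψ)
      - 2 * vdot (G.mulVec ψ) (G.mulVec (Cᵀ.mulVec (C.mulVec ψ)))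
      - vnormSq (Gᵀ.mulVec (C.mulVec ψ))
      - 2 * vdot (C.mulVec ψ) (G.mulVec (Cᵀ.mulVec (G.mulVec ψ)))
      - vnormSq (Cᵀ.mulVec (G.mulVec ψ))
    = frobSq (Real.sqrt (vnormSq (C.mulVec ψ)) • G -
          (Real.sqrt (vnormSq (C.mulVec ψ)))⁻¹ •
            vecMulVec (G.mulVec ψ) (Cᵀ.mulVec (C.mulVec ψ)))
      - vnormSq (Gᵀ.mulVec (C.mulVec ψ) - Cᵀ.mulVec (G.mulVec ψ)) := by
  subst hC
  set Cm := vecMulVec c₁ c₂ with hCm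
  have hCψ : Cm.mulVec ψ = (vdot c₂ ψ) • c₁ := sep_mulVec c₁ c₂ ψ
  set α := vdot c₂ ψ with hα
  have hpos : 0 < vnormSq (Cm.mulVec ψ) := vnormSq_pos _ hψ
  rw [hCψ] at hpos
  rw [vnormSq_smul] at hpos
  have hsne : α ^ 2 * vnormSq c₁ ≠ 0 := hpos.ne'
  have hane : Real.sqrt (α ^ 2 * vnormSq c₁) ≠ 0 :=
    (Real.sqrt_pos.mpr hpos).ne'
  have ha2 : Real.sqrt (α ^ 2 * vnormSq c₁) ^ 2 = α ^ 2 * vnormSq c₁ :=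
    Real.sq_sqrt hpos.le
  have hainv : (Real.sqrt (α ^ 2 * vnormSq c₁))⁻¹ ^ 2 = (α ^ 2 * vnormSq c₁)⁻¹ := by
    rw [inv_pow, ha2]
  rw [frobSq_expand, vnormSq_sub, hCψ]
  rw [sep_transpose_mulVec c₁ c₂ ((α : ℝ) • c₁)]
  rw [vdot_smul_right, vdot_self]
  rw [sep_transpose_mulVec c₁ c₂ (G.mulVec ψ)]
  rw [mulVec_smul' G (α * vnormSq c₁) c₂, mulVec_smul' G (vdot c₁ (G.mulVec ψ)) c₂,
      mulVec_smul' Gᵀ α c₁]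
  rw [sep_frobSq, sep_trace]
  rw [vnormSq_smul, vnormSq_smul, vnormSq_smul, vnormSq_smul]
  rw [vdot_smul_left, vdot_smul_left, vdot_smul_right, vdot_smul_right, vdot_smul_right,
      vdot_smul_left]
  rw [← vdot_transpose G c₁ c₂]
  rw [hainv, mul_inv_cancel₀ hane, ha2]
  have hα0 : α ≠ 0 := fun h => hsne (by rw [h]; ring)
  field_simp
  ring

end
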